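/- Let (A; G, H) be a partial dynamic De Morgan algebra such that (a) x ∈ dom G implies G(x)' ∈ dom H, and (b) x ∈ dom H implies H(x)' ∈ dom G. Then for every nonempty proper down-set D of A: (1) for every b ∈ dom G, κ_D(G(b)) = ⨅{ κ_E(b) : E a nonempty proper down-set with D R_G E }; and (2) for every b ∈ dom H, κ_D(H(b)) = ⨅{ κ_E(b) : E a nonempty proper down-set with E R_G D }, both infima taken in M₂ (viewed as a complete lattice). -/
import Mathlib


/-- A down-set of a poset. -/
def IsDownSet {A : Type*} [PartialOrder A] (D : Set A) : Prop :=
  ∀ ⦃x y : A⦄, x ≤ y → y ∈ D → x ∈ D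

/-- A nonempty proper down-set of a poset. -/
def IsProperDownSet {A : Type*} [PartialOrder A] (D : Set A) : Prop :=
  D.Nonempty ∧ D ≠ Set.univ ∧ IsDownSet D

open Classical in
/-- `hD D a = false` iff `a ∈ D`. -/
noncomputable def hD {A : Type*} (D : Set A) (a : A) : Bool :=
  if a ∈ D then false else true

/-- `κ_D(a) = (h_D(a), h_D^∂(a))` where `h_D^∂(a) = ¬ h_D(a')`. -/
noncomputable def kappa {A : Type*} (neg : A → A) (D : Set A) (a : A) :
    Bool × Bool := (hD D a, ! hD D (neg a))

/-- The negation of the four-element De Morgan poset `M₂`: `(a,b)' = (¬b, ¬a)`. -/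
def negM2 (m : Bool × Bool) : Bool × Bool := (! m.2, ! m.1)

/-- The relation `R_G` on down-sets: `D R_G E` iff `κ_D(G x) ≤ κ_E(x)` for all `x ∈ dom G`. -/
def RG {A : Type*} (neg : A → A) (domG : Set A) (G : A → A) (D E : Set A) : Prop :=
  ∀ x ∈ domG, kappa neg D (G x) ≤ kappa neg E x

/-- Order characterization of `kappa ≤ kappa`. -/
lemma kappa_le_iff' {A : Type*} (neg : A → A) (X Y : Set A) (a b : A) :
    kappa neg X a ≤ kappa neg Y b ↔ ((b ∈ Y → a ∈ X) ∧ (neg a ∈ X → neg b ∈ Y)) := by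
  classical
  simp only [kappa, hD, Prod.mk_le_mk]
  by_cases h1 : a ∈ X <;> by_cases h2 : b ∈ Y <;> by_cases h3 : neg a ∈ X <;>
    by_cases h4 : neg b ∈ Y <;> simp [h1, h2, h3, h4]

lemma hD_mem {A : Type*} {D : Set A} {a : A} (h : a ∈ D) : hD D a = false := by
  classical simp [hD, h]

lemma hD_not_mem {A : Type*} {D : Set A} {a : A} (h : a ∉ D) : hD D a = true := by
  classical simp [hD, h]

/-- For a partial dynamic De Morgan algebra `(A; G, H)` satisfying the domain
conditions (a) and (b): for every nonempty proper down-set `D`,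
`κ_D(G(b)) = ⨅ {κ_E(b) : D R_G E}` for `b ∈ dom G`, and
`κ_D(H(b)) = ⨅ {κ_E(b) : E R_G D}` for `b ∈ dom H`. -/
theorem stmt_14 {A : Type*} [PartialOrder A] [BoundedOrder A]
    (neg : A → A)
    (hanti : ∀ a b : A, a ≤ b → neg b ≤ neg a)
    (hinv : ∀ a : A, neg (neg a) = a)
    (domG : Set A) (G : A → A) (domH : Set A) (H : A → A)
    -- (P1)
    (hbotG : (⊥ : A) ∈ domG) (htopG : (⊤ : A) ∈ domG)
    (hbotH : (⊥ : A) ∈ domH) (htopH : (⊤ : A) ∈ domH)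
    (hG0 : G ⊥ = ⊥) (hG1 : G ⊤ = ⊤) (hH0 : H ⊥ = ⊥) (hH1 : H ⊤ = ⊤)
    -- (P2)
    (hP2G : ∀ x ∈ domG, ∀ y ∈ domG, x ≤ y → G x ≤ G y)
    (hP2H : ∀ x ∈ domH, ∀ y ∈ domH, x ≤ y → H x ≤ H y)
    -- (P3)
    (hP3G : ∀ x : A, neg x ∈ domH → neg (H (neg x)) ∈ domG →
      x ≤ G (neg (H (neg x))))
    (hP3H : ∀ x : A, neg x ∈ domG → neg (G (neg x)) ∈ domH →
      x ≤ H (neg (G (neg x))))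
    -- (P4)
    (hP4G : ∀ x y : A, x ≤ y → x ∈ domG → neg y ∈ domG → G x ≤ neg (G (neg y)))
    (hP4H : ∀ x y : A, x ≤ y → x ∈ domH → neg y ∈ domH → H x ≤ neg (H (neg y)))
    -- domain conditions (a) and (b)
    (ha : ∀ x ∈ domG, neg (G x) ∈ domH)
    (hb : ∀ x ∈ domH, neg (H x) ∈ domG) :
    ∀ D : Set A, IsProperDownSet D →
      (∀ b ∈ domG,
        kappa neg D (G b) =
          sInf {m : Bool × Bool |
            ∃ E : Set A, IsProperDownSet E ∧ RG neg domG G D E ∧ m = kappa neg E b}) ∧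
      (∀ b ∈ domH,
        kappa neg D (H b) =
          sInf {m : Bool × Bool |
            ∃ E : Set A, IsProperDownSet E ∧ RG neg domG G E D ∧ m = kappa neg E b}) := by
  classical
  have hnt : neg (⊤ : A) = ⊥ := by
    apply le_antisymm _ bot_le
    have h := hanti (neg (⊥ : A)) ⊤ le_top
    rwa [hinv] at h
  have hnb : neg (⊥ : A) = ⊤ := by rw [← hnt, hinv]
  -- `neg x ≤ H (neg (G x))` for `x ∈ dom G`
  have lemB : ∀ x ∈ domG, neg x ≤ H (neg (G x)) := by
    intro x hx
    have h := hP3H (neg x) (by rw [hinv]; exact hx) (by rw [hinv]; exact ha x hx)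
    rwa [hinv] at h
  -- `neg (H (neg (G y))) ≤ y` for `y ∈ dom G`
  have lemA : ∀ y ∈ domG, neg (H (neg (G y))) ≤ y := by
    intro y hy
    have h := hanti _ _ (lemB y hy)
    rwa [hinv] at h
  intro D hDps
  obtain ⟨hDne, hDneq, hDdown⟩ := hDps
  have hbotD : (⊥ : A) ∈ D := by
    obtain ⟨d, hd⟩ := hDne
    exact hDdown bot_le hd
  have htopD : (⊤ : A) ∉ D := fun h =>
    hDneq (Set.eq_univ_of_forall fun x => hDdown le_top h)
  -- `neg b ≤ G (neg (H b))` for `b ∈ dom H`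
  have key1 : ∀ b ∈ domH, neg b ≤ G (neg (H b)) := by
    intro b hbH
    have h := hP3G (neg b) (by rw [hinv]; exact hbH) (by rw [hinv]; exact hb b hbH)
    rwa [hinv] at h
  constructor
  · -- Part (1)
    intro b hbG
    apply le_antisymm
    · apply le_sInf
      rintro m ⟨E, hE, hRG, rfl⟩
      exact hRG b hbG
    · rw [Prod.le_def]
      constructor
      · -- first coordinate
        by_cases hGb : G b ∈ D
        · -- construct E₁
          set E₁ : Set A :=
            {y | y ≤ b ∨ ∃ x, x ∈ domG ∧ neg (G x) ∈ D ∧ y ≤ neg x} with hE₁def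
          have hE₁down : IsDownSet E₁ := by
            rintro u v huv (h | ⟨x, hx, hx2, hvx⟩)
            · exact Or.inl (huv.trans h)
            · exact Or.inr ⟨x, hx, hx2, huv.trans hvx⟩
          have hE₁ps : IsProperDownSet E₁ := by
            refine ⟨⟨b, Or.inl le_rfl⟩, ?_, hE₁down⟩
            intro hcon
            have htopE : (⊤ : A) ∈ E₁ := hcon ▸ Set.mem_univ ⊤
            rcases htopE with h | ⟨x, hx, hx2, hle⟩
            · have hbt : b = ⊤ := top_le_iff.mp h
              rw [hbt, hG1] at hGb
              exact htopD hGb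
            · have hx0 : x = ⊥ := by
                rw [← hinv x, top_le_iff.mp hle, hnt]
              rw [hx0, hG0, hnb] at hx2
              exact htopD hx2
          have hRGE₁ : RG neg domG G D E₁ := by
            intro x hx
            rw [kappa_le_iff']
            constructor
            · rintro (h | ⟨z, hz, hz2, hle⟩)
              · exact hDdown (hP2G x hx b hbG h) hGb
              · have h4 := hP4G x (neg z) hle hx (by rw [hinv]; exact hz)
                rw [hinv] at h4
                exact hDdown h4 hz2
            · intro hnGx
              exact Or.inr ⟨x, hx, hnGx, le_rfl⟩
          have hmem : kappa neg E₁ b ∈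
              {m : Bool × Bool | ∃ E : Set A,
                IsProperDownSet E ∧ RG neg domG G D E ∧ m = kappa neg E b} :=
            ⟨E₁, hE₁ps, hRGE₁, rfl⟩
          have h1 := (Prod.le_def.mp (sInf_le hmem)).1
          have hbE₁ : b ∈ E₁ := Or.inl le_rfl
          calc _ ≤ (kappa neg E₁ b).1 := h1
            _ ≤ _ := by simp [kappa, hD_mem hbE₁]
        · simp [kappa, hD_not_mem hGb]
      · -- second coordinate
        by_cases hnGb : neg (G b) ∈ D
        · simp [kappa, hD_mem hnGb]
        · -- construct E₂
          set E₂ : Set A := {y | ∃ x, x ∈ domG ∧ neg (G x) ∈ D ∧ y ≤ neg x} with hE₂def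
          have hE₂down : IsDownSet E₂ := by
            rintro u v huv ⟨x, hx, hx2, hvx⟩
            exact ⟨x, hx, hx2, huv.trans hvx⟩
          have hE₂ps : IsProperDownSet E₂ := by
            refine ⟨⟨⊥, ⊤, htopG, by rw [hG1, hnt]; exact hbotD, bot_le⟩, ?_, hE₂down⟩
            intro hcon
            have htopE : (⊤ : A) ∈ E₂ := hcon ▸ Set.mem_univ ⊤
            obtain ⟨x, hx, hx2, hle⟩ := htopE
            have hx0 : x = ⊥ := by
              rw [← hinv x, top_le_iff.mp hle, hnt]
            rw [hx0, hG0, hnb] at hx2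
            exact htopD hx2
          have hRGE₂ : RG neg domG G D E₂ := by
            intro x hx
            rw [kappa_le_iff']
            constructor
            · rintro ⟨z, hz, hz2, hle⟩
              have h4 := hP4G x (neg z) hle hx (by rw [hinv]; exact hz)
              rw [hinv] at h4
              exact hDdown h4 hz2
            · intro hnGx
              exact ⟨x, hx, hnGx, le_rfl⟩
          have hnbE₂ : neg b ∉ E₂ := by
            rintro ⟨x, hx, hx2, hle⟩
            have hxb : x ≤ b := by
              have h := hanti _ _ hle
              rw [hinv, hinv] at h
              exact h
            have := hanti _ _ (hP2G x hx b hbG hxb)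
            exact hnGb (hDdown this hx2)
          have hmem : kappa neg E₂ b ∈
              {m : Bool × Bool | ∃ E : Set A,
                IsProperDownSet E ∧ RG neg domG G D E ∧ m = kappa neg E b} :=
            ⟨E₂, hE₂ps, hRGE₂, rfl⟩
          have h2 := (Prod.le_def.mp (sInf_le hmem)).2
          calc _ ≤ (kappa neg E₂ b).2 := h2
            _ ≤ _ := by simp [kappa, hD_not_mem hnbE₂]
  · -- Part (2)
    intro b hbH
    have hkey : neg b ≤ G (neg (H b)) := key1 b hbH
    have hkey' : neg (G (neg (H b))) ≤ b := by
      have h := hanti _ _ hkey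
      rwa [hinv] at h
    -- shared facts for witness down-sets built from `{G x : x ∈ dom G ∩ D}`
    have hGtop : ∀ x ∈ domG, x ∈ D → ¬ (⊤ : A) ≤ G x := by
      intro x hx hxD htop
      have h1 := lemB x hx
      rw [top_le_iff.mp htop, hnt, hH0] at h1
      have hx1 : x = ⊤ := by rw [← hinv x, le_bot_iff.mp h1, hnb]
      exact htopD (hx1 ▸ hxD)
    have hd2 : ∀ x ∈ domG, ∀ y ∈ domG, y ∈ D → neg (G x) ≤ G y → neg x ∈ D := by
      intro x hx y hy hyD hle
      have h1 := lemB x hx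
      have h2 := hP4H (neg (G x)) (G y) hle (ha x hx) (ha y hy)
      have h3 := lemA y hy
      exact hDdown (h1.trans (h2.trans h3)) hyD
    apply le_antisymm
    · apply le_sInf
      rintro m ⟨E, hEps, hRGE, rfl⟩
      obtain ⟨hEne, hEneq, hEdown⟩ := hEps
      rw [kappa_le_iff']
      constructor
      · intro hbE
        have hmem : neg (G (neg (H b))) ∈ E := hEdown hkey' hbE
        have hx := (kappa_le_iff' neg E D (G (neg (H b))) (neg (H b))).mp
          (hRGE (neg (H b)) (hb b hbH))
        have := hx.2 hmem
        rwa [hinv] at this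
      · intro hnHb
        have hx := (kappa_le_iff' neg E D (G (neg (H b))) (neg (H b))).mp
          (hRGE (neg (H b)) (hb b hbH))
        exact hEdown hkey (hx.1 hnHb)
    · rw [Prod.le_def]
      constructor
      · by_cases hHb : H b ∈ D
        · -- construct E₃
          set E₃ : Set A := {y | y ≤ b ∨ ∃ x, x ∈ domG ∧ x ∈ D ∧ y ≤ G x} with hE₃def
          have hE₃down : IsDownSet E₃ := by
            rintro u v huv (h | ⟨x, hx, hxD, hvx⟩)
            · exact Or.inl (huv.trans h)
            · exact Or.inr ⟨x, hx, hxD, huv.trans hvx⟩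
          have hE₃ps : IsProperDownSet E₃ := by
            refine ⟨⟨b, Or.inl le_rfl⟩, ?_, hE₃down⟩
            intro hcon
            have htopE : (⊤ : A) ∈ E₃ := hcon ▸ Set.mem_univ ⊤
            rcases htopE with h | ⟨x, hx, hxD, hle⟩
            · have hbt : b = ⊤ := top_le_iff.mp h
              rw [hbt, hH1] at hHb
              exact htopD hHb
            · exact hGtop x hx hxD hle
          have hRGE₃ : RG neg domG G E₃ D := by
            intro x hx
            rw [kappa_le_iff']
            constructor
            · intro hxD
              exact Or.inr ⟨x, hx, hxD, le_rfl⟩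
            · rintro (h | ⟨y, hy, hyD, hle⟩)
              · have h1 := lemB x hx
                have h2 := hP2H (neg (G x)) (ha x hx) b hbH h
                exact hDdown (h1.trans h2) hHb
              · exact hd2 x hx y hy hyD hle
          have hmem : kappa neg E₃ b ∈
              {m : Bool × Bool | ∃ E : Set A,
                IsProperDownSet E ∧ RG neg domG G E D ∧ m = kappa neg E b} :=
            ⟨E₃, hE₃ps, hRGE₃, rfl⟩
          have h1 := (Prod.le_def.mp (sInf_le hmem)).1
          have hbE₃ : b ∈ E₃ := Or.inl le_rfl
          calc _ ≤ (kappa neg E₃ b).1 := h1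
            _ ≤ _ := by simp [kappa, hD_mem hbE₃]
        · simp [kappa, hD_not_mem hHb]
      · by_cases hnHb : neg (H b) ∈ D
        · simp [kappa, hD_mem hnHb]
        · -- construct E₄
          set E₄ : Set A := {y | ∃ x, x ∈ domG ∧ x ∈ D ∧ y ≤ G x} with hE₄def
          have hE₄down : IsDownSet E₄ := by
            rintro u v huv ⟨x, hx, hxD, hvx⟩
            exact ⟨x, hx, hxD, huv.trans hvx⟩
          have hE₄ps : IsProperDownSet E₄ := by
            refine ⟨⟨⊥, ⊥, hbotG, hbotD, bot_le⟩, ?_, hE₄down⟩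
            intro hcon
            have htopE : (⊤ : A) ∈ E₄ := hcon ▸ Set.mem_univ ⊤
            obtain ⟨x, hx, hxD, hle⟩ := htopE
            exact hGtop x hx hxD hle
          have hRGE₄ : RG neg domG G E₄ D := by
            intro x hx
            rw [kappa_le_iff']
            constructor
            · intro hxD
              exact ⟨x, hx, hxD, le_rfl⟩
            · rintro ⟨y, hy, hyD, hle⟩
              exact hd2 x hx y hy hyD hle
          have hnbE₄ : neg b ∉ E₄ := by
            rintro ⟨x, hx, hxD, hle⟩
            have hle' : neg (G x) ≤ b := by
              have h := hanti _ _ hle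
              rwa [hinv] at h
            have h2 := hP2H (neg (G x)) (ha x hx) b hbH hle'
            have h3 := hanti _ _ h2
            have h4 := lemA x hx
            exact hnHb (hDdown (h3.trans h4) hxD)
          have hmem : kappa neg E₄ b ∈
              {m : Bool × Bool | ∃ E : Set A,
                IsProperDownSet E ∧ RG neg domG G E D ∧ m = kappa neg E b} :=
            ⟨E₄, hE₄ps, hRGE₄, rfl⟩
          have h2 := (Prod.le_def.mp (sInf_le hmem)).2
          calc _ ≤ (kappa neg E₄ b).2 := h2
            _ ≤ _ := by simp [kappa, hD_not_mem hnbE₄]
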